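/- Correctness of the Pruning-on-the-Right rule: if the temporal k-core T^k_[ts,te] has tightest time interval [ts',te'] with te' < te, then for every end time c with te' ≤ c < te, the temporal k-core T^k_[ts,c] is identical to T^k_[ts,te]. -/

import Mathlib

abbrev TEdge : Type := ℕ × ℕ × ℤ

/-- Projection of a temporal edge set over time interval [a,b]. -/
def projE (E : Finset TEdge) (a b : ℤ) : Finset TEdge :=
  E.filter (fun e => a ≤ e.2.2 ∧ e.2.2 ≤ b)

def verts (E : Finset TEdge) : Finset ℕ :=
  E.image (fun e => e.1) ∪ E.image (fun e => e.2.1)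

/-- Distinct neighbors of `v` inside vertex set `S` via edges of `E`. -/
def nbrs (E : Finset TEdge) (S : Finset ℕ) (v : ℕ) : Finset ℕ :=
  S.filter (fun u => u ≠ v ∧
    (E.filter (fun e => (e.1 = u ∧ e.2.1 = v) ∨ (e.1 = v ∧ e.2.1 = u))).Nonempty)

/-- `S` is a `k`-core candidate: every vertex of `S` has ≥ k distinct neighbors in `S`. -/
def isCoreSet (E : Finset TEdge) (k : ℕ) (S : Finset ℕ) : Prop :=
  ∀ v ∈ S, k ≤ (nbrs E S v).card

instance (E : Finset TEdge) (k : ℕ) : DecidablePred (isCoreSet E k) := fun S => by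
  unfold isCoreSet; infer_instance

/-- The `k`-core vertex set of a temporal edge set: union of all candidates. -/
def core (E : Finset TEdge) (k : ℕ) : Finset ℕ :=
  ((verts E).powerset.filter (isCoreSet E k)).sup id

/-- The edges of `E` induced among the `k`-core vertices. -/
def coreEdges (E : Finset TEdge) (k : ℕ) : Finset TEdge :=
  E.filter (fun e => e.1 ∈ core E k ∧ e.2.1 ∈ core E k)

/-- Vertices of the temporal k-core of interval [a,b]. -/
def coreV (E : Finset TEdge) (k : ℕ) (a b : ℤ) : Finset ℕ :=
  core (projE E a b) k

/-- Temporal edges of the temporal k-core of interval [a,b]. -/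
def coreE (E : Finset TEdge) (k : ℕ) (a b : ℤ) : Finset TEdge :=
  coreEdges (projE E a b) k

/-- Two intervals induce identical temporal k-cores (same vertices and temporal edges). -/
def identCore (E : Finset TEdge) (k : ℕ) (a b a' b' : ℤ) : Prop :=
  coreV E k a b = coreV E k a' b' ∧ coreE E k a b = coreE E k a' b'

lemma nbrs_mono_E {E E' : Finset TEdge} (hE : E ⊆ E') (S : Finset ℕ) (v : ℕ) :
    nbrs E S v ⊆ nbrs E' S v := by
  intro u hu
  simp only [nbrs, Finset.mem_filter] at hu ⊢
  exact ⟨hu.1, hu.2.1, hu.2.2.choose, Finset.mem_filter.mpr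
    ⟨hE (Finset.mem_filter.mp hu.2.2.choose_spec).1,
     (Finset.mem_filter.mp hu.2.2.choose_spec).2⟩⟩

lemma nbrs_mono_S (E : Finset TEdge) {S S' : Finset ℕ} (hS : S ⊆ S') (v : ℕ) :
    nbrs E S v ⊆ nbrs E S' v := by
  intro u hu
  simp only [nbrs, Finset.mem_filter] at hu ⊢
  exact ⟨hS hu.1, hu.2⟩

lemma mem_core_iff {E : Finset TEdge} {k : ℕ} {v : ℕ} :
    v ∈ core E k ↔ ∃ C, C ⊆ verts E ∧ isCoreSet E k C ∧ v ∈ C := by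
  simp only [core, Finset.mem_sup, Finset.mem_filter, Finset.mem_powerset, id]
  tauto

lemma subset_core {E : Finset TEdge} {k : ℕ} {C : Finset ℕ}
    (h1 : C ⊆ verts E) (h2 : isCoreSet E k C) : C ⊆ core E k :=
  fun v hv => mem_core_iff.mpr ⟨C, h1, h2, hv⟩

lemma core_subset_verts (E : Finset TEdge) (k : ℕ) : core E k ⊆ verts E := by
  intro v hv
  obtain ⟨C, h1, _, h3⟩ := mem_core_iff.mp hv
  exact h1 h3

lemma core_isCoreSet (E : Finset TEdge) (k : ℕ) : isCoreSet E k (core E k) := by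
  intro v hv
  obtain ⟨C, h1, h2, h3⟩ := mem_core_iff.mp hv
  exact le_trans (h2 v h3) (Finset.card_le_card
    (nbrs_mono_S E (subset_core h1 h2) v))

lemma core_mono {E E' : Finset TEdge} (hE : E ⊆ E') (k : ℕ) :
    core E k ⊆ core E' k := by
  intro v hv
  obtain ⟨C, h1, h2, h3⟩ := mem_core_iff.mp hv
  refine mem_core_iff.mpr ⟨C, ?_, ?_, h3⟩
  · refine h1.trans ?_
    intro x hx
    simp only [verts, Finset.mem_union, Finset.mem_image] at hx ⊢
    rcases hx with ⟨e, he, h⟩ | ⟨e, he, h⟩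
    · exact Or.inl ⟨e, hE he, h⟩
    · exact Or.inr ⟨e, hE he, h⟩
  · exact fun u hu => le_trans (h2 u hu) (Finset.card_le_card (nbrs_mono_E hE C u))


/-- STATEMENT 8T^k_[ts,c] is identical to T^k_[ts,te]. -/
theorem stmt_8 (E : Finset TEdge) (k : ℕ) (ts te ts' te' : ℤ)
    (h : (coreE E k ts te).Nonempty)
    (hmin : IsLeast {t : ℤ | ∃ e ∈ coreE E k ts te, e.2.2 = t} ts')
    (hmax : IsGreatest {t : ℤ | ∃ e ∈ coreE E k ts te, e.2.2 = t} te')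
    (hlt : te' < te) :
    ∀ c : ℤ, te' ≤ c → c < te → identCore E k ts c ts te := by
  intro c hc1 hc2
  set P := projE E ts te with hP
  set Pc := projE E ts c with hPc
  have hsub : Pc ⊆ P := by
    intro e he
    simp only [hPc, hP, projE, Finset.mem_filter] at he ⊢
    exact ⟨he.1, he.2.1, le_of_lt (lt_of_le_of_lt he.2.2 hc2)⟩
  set S := core P k with hS
  -- edges of P among S lie in Pc
  have key : ∀ e ∈ P, e.1 ∈ S → e.2.1 ∈ S → e ∈ Pc := by
    intro e he h1 h2
    have heC : e ∈ coreE E k ts te := by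
      simp only [coreE, coreEdges, Finset.mem_filter]
      exact ⟨he, h1, h2⟩
    have hle : e.2.2 ≤ te' := hmax.2 ⟨e, heC, rfl⟩
    simp only [hP, projE, Finset.mem_filter] at he
    simp only [hPc, projE, Finset.mem_filter]
    exact ⟨he.1, he.2.1, le_trans hle hc1⟩
  -- nbrs within S are the same for P and Pc
  have hnbrs : ∀ v ∈ S, nbrs P S v ⊆ nbrs Pc S v := by
    intro v hv u hu
    simp only [nbrs, Finset.mem_filter] at hu ⊢
    obtain ⟨huS, hne, e, heP⟩ := hu
    rw [Finset.mem_filter] at heP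
    have h1 : e.1 ∈ S := by rcases heP.2 with ⟨h, _⟩ | ⟨h, _⟩ <;> rw [h] <;> assumption
    have h2 : e.2.1 ∈ S := by rcases heP.2 with ⟨_, h⟩ | ⟨_, h⟩ <;> rw [h] <;> assumption
    exact ⟨huS, hne, e, Finset.mem_filter.mpr ⟨key e heP.1 h1 h2, heP.2⟩⟩
  have hcoreSet : isCoreSet Pc k S := by
    intro v hv
    exact le_trans (core_isCoreSet P k v hv) (Finset.card_le_card (hnbrs v hv))
  -- S ⊆ verts Pc
  have hvert : S ⊆ verts Pc := by
    intro v hv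
    have hmem : ∃ e ∈ Pc, v = e.1 ∨ v = e.2.1 := by
      rcases Nat.eq_zero_or_pos k with hk | hk
      · -- k = 0 : verts P ⊆ S
        have hvp : verts P ⊆ S := subset_core (le_refl _)
          (by intro u _; rw [hk]; exact Nat.zero_le _)
        have hvP : v ∈ verts P := core_subset_verts P k hv
        simp only [verts, Finset.mem_union, Finset.mem_image] at hvP
        rcases hvP with ⟨e, he, h⟩ | ⟨e, he, h⟩
        · refine ⟨e, key e he ?_ ?_, Or.inl h.symm⟩
          · rw [h]; exact hv
          · apply hvp
            simp only [verts, Finset.mem_union, Finset.mem_image]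
            exact Or.inr ⟨e, he, rfl⟩
        · refine ⟨e, key e he ?_ ?_, Or.inr h.symm⟩
          · apply hvp
            simp only [verts, Finset.mem_union, Finset.mem_image]
            exact Or.inl ⟨e, he, rfl⟩
          · rw [h]; exact hv
      · have hcard : 0 < (nbrs Pc S v).card := lt_of_lt_of_le hk (hcoreSet v hv)
        obtain ⟨u, hu⟩ := Finset.card_pos.mp hcard
        simp only [nbrs, Finset.mem_filter] at hu
        obtain ⟨_, _, e, he⟩ := hu
        rw [Finset.mem_filter] at he
        rcases he.2 with ⟨_, h⟩ | ⟨h, _⟩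
        · exact ⟨e, he.1, Or.inr h.symm⟩
        · exact ⟨e, he.1, Or.inl h.symm⟩
    obtain ⟨e, he, h⟩ := hmem
    simp only [verts, Finset.mem_union, Finset.mem_image]
    rcases h with h | h
    · exact Or.inl ⟨e, he, h.symm⟩
    · exact Or.inr ⟨e, he, h.symm⟩
  have hV : coreV E k ts c = coreV E k ts te := by
    apply Finset.Subset.antisymm
    · exact core_mono hsub k
    · exact subset_core hvert hcoreSet
  refine ⟨hV, ?_⟩
  have hVc : core Pc k = S := hV
  apply Finset.Subset.antisymm
  · intro e he
    simp only [coreE, coreEdges, Finset.mem_filter, hVc] at he ⊢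
    exact ⟨hsub he.1, by rw [show core (projE E ts c) k = core (projE E ts te) k from hV] at he; exact he.2⟩
  · intro e he
    simp only [coreE, coreEdges, Finset.mem_filter, hVc] at he ⊢
    exact ⟨key e he.1 he.2.1 he.2.2, by rw [show core (projE E ts c) k = core (projE E ts te) k from hV]; exact he.2⟩
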